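/- In the quotient ring $A = \mathbb{Z}[z_{12},z_{20},z_{30}]/(2z_{30},\, 3z_{20}^2,\, 5z_{12}^4,\, z_{12}^5 + z_{20}^3 + z_{30}^2)$, the following hold: $\overline{z_{12}}^5 = -\overline{z_{20}}^3 - \overline{z_{30}}^2$, the element $\overline{z_{12}}^3\,\overline{z_{20}}$ generates a subgroup isomorphic to $\mathbb{Z}$ (it has infinite additive order), and $\overline{z_{12}}^4\,\overline{z_{20}}$ has additive order exactly $5$. -/

import Mathlib

open MvPolynomial

/-- The ideal `(2z₃₀, 3z₂₀², 5z₁₂⁴, z₁₂⁵ + z₂₀³ + z₃₀²)` in `ℤ[z₁₂,z₂₀,z₃₀]`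
(`z₁₂ = X 0`, `z₂₀ = X 1`, `z₃₀ = X 2`). -/
noncomputable def I19 : Ideal (MvPolynomial (Fin 3) ℤ) :=
  Ideal.span {2 * X (2 : Fin 3), 3 * (X (1 : Fin 3)) ^ 2, 5 * (X (0 : Fin 3)) ^ 4,
    (X (0 : Fin 3)) ^ 5 + (X (1 : Fin 3)) ^ 3 + (X (2 : Fin 3)) ^ 2}

lemma auxZ : ∀ p ∈ I19, ∀ m : Fin 3 →₀ ℕ, m 2 = 0 → m 1 ≤ 1 → m 0 ≤ 3 →
    coeff m p = 0 := by
  intro p hp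
  refine Submodule.span_induction ?_ ?_ ?_ ?_ hp
  · rintro x hx m h2 h1 h0
    simp only [Set.mem_insert_iff, Set.mem_singleton_iff] at hx
    have hs2 : ¬ Finsupp.single (2:Fin 3) 1 = m := fun h => by
      rw [← h] at h2; simp at h2
    have hs22 : ¬ Finsupp.single (2:Fin 3) 2 = m := fun h => by
      rw [← h] at h2; simp at h2
    have hs1 : ¬ Finsupp.single (1:Fin 3) 2 = m := fun h => by
      rw [← h] at h1; simp at h1
    have hs13 : ¬ Finsupp.single (1:Fin 3) 3 = m := fun h => by
      rw [← h] at h1; simp at h1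
    have hs0 : ¬ Finsupp.single (0:Fin 3) 4 = m := fun h => by
      rw [← h] at h0; simp at h0
    have hs05 : ¬ Finsupp.single (0:Fin 3) 5 = m := fun h => by
      rw [← h] at h0; simp at h0
    rcases hx with rfl | rfl | rfl | rfl
    · have : (2 * X (2:Fin 3) : MvPolynomial (Fin 3) ℤ) = C 2 * X 2 := by simp
      rw [this, coeff_C_mul, coeff_X', if_neg hs2, mul_zero]
    · have : (3 * (X (1:Fin 3))^2 : MvPolynomial (Fin 3) ℤ) = C 3 * (X 1)^2 := by simp
      rw [this, coeff_C_mul, coeff_X_pow, if_neg hs1, mul_zero]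
    · have : (5 * (X (0:Fin 3))^4 : MvPolynomial (Fin 3) ℤ) = C 5 * (X 0)^4 := by simp
      rw [this, coeff_C_mul, coeff_X_pow, if_neg hs0, mul_zero]
    · rw [coeff_add, coeff_add, coeff_X_pow, coeff_X_pow, coeff_X_pow,
        if_neg hs05, if_neg hs13, if_neg hs22]
      simp
  · intro m _ _ _; simp
  · intro x y _ _ hx hy m h2 h1 h0
    rw [coeff_add, hx m h2 h1 h0, hy m h2 h1 h0, add_zero]
  · intro a x _ hx m h2 h1 h0
    rw [smul_eq_mul, coeff_mul]
    refine Finset.sum_eq_zero ?_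
    rintro ⟨m1, m2'⟩ hmem
    rw [Finset.HasAntidiagonal.mem_antidiagonal] at hmem
    have e2 : m1 2 + m2' 2 = m 2 := by rw [← hmem]; simp
    have e1 : m1 1 + m2' 1 = m 1 := by rw [← hmem]; simp
    have e0 : m1 0 + m2' 0 = m 0 := by rw [← hmem]; simp
    rw [hx m2' (by omega) (by omega) (by omega), mul_zero]

lemma aux5 : ∀ p ∈ I19, ∀ m : Fin 3 →₀ ℕ, m 2 = 0 → m 1 ≤ 1 → m 0 ≤ 4 →
    (5 : ℤ) ∣ coeff m p := by
  intro p hp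
  refine Submodule.span_induction ?_ ?_ ?_ ?_ hp
  · rintro x hx m h2 h1 h0
    simp only [Set.mem_insert_iff, Set.mem_singleton_iff] at hx
    have hs2 : ¬ Finsupp.single (2:Fin 3) 1 = m := fun h => by
      rw [← h] at h2; simp at h2
    have hs22 : ¬ Finsupp.single (2:Fin 3) 2 = m := fun h => by
      rw [← h] at h2; simp at h2
    have hs1 : ¬ Finsupp.single (1:Fin 3) 2 = m := fun h => by
      rw [← h] at h1; simp at h1
    have hs13 : ¬ Finsupp.single (1:Fin 3) 3 = m := fun h => by
      rw [← h] at h1; simp at h1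
    have hs05 : ¬ Finsupp.single (0:Fin 3) 5 = m := fun h => by
      rw [← h] at h0; simp at h0
    rcases hx with rfl | rfl | rfl | rfl
    · have : (2 * X (2:Fin 3) : MvPolynomial (Fin 3) ℤ) = C 2 * X 2 := by simp
      rw [this, coeff_C_mul, coeff_X', if_neg hs2, mul_zero]
      exact dvd_zero _
    · have : (3 * (X (1:Fin 3))^2 : MvPolynomial (Fin 3) ℤ) = C 3 * (X 1)^2 := by simp
      rw [this, coeff_C_mul, coeff_X_pow, if_neg hs1, mul_zero]
      exact dvd_zero _
    · have : (5 * (X (0:Fin 3))^4 : MvPolynomial (Fin 3) ℤ) = C 5 * (X 0)^4 := by simp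
      rw [this, coeff_C_mul]
      exact Dvd.intro _ rfl
    · rw [coeff_add, coeff_add, coeff_X_pow, coeff_X_pow, coeff_X_pow,
        if_neg hs05, if_neg hs13, if_neg hs22]
      simp
  · intro m _ _ _; simp
  · intro x y _ _ hx hy m h2 h1 h0
    rw [coeff_add]; exact dvd_add (hx m h2 h1 h0) (hy m h2 h1 h0)
  · intro a x _ hx m h2 h1 h0
    rw [smul_eq_mul, coeff_mul]
    refine Finset.dvd_sum ?_
    rintro ⟨m1, m2'⟩ hmem
    rw [Finset.HasAntidiagonal.mem_antidiagonal] at hmem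
    have e2 : m1 2 + m2' 2 = m 2 := by rw [← hmem]; simp
    have e1 : m1 1 + m2' 1 = m 1 := by rw [← hmem]; simp
    have e0 : m1 0 + m2' 0 = m 0 := by rw [← hmem]; simp
    exact (hx m2' (by omega) (by omega) (by omega)).mul_left _

/-- In `A = ℤ[z₁₂,z₂₀,z₃₀]/(2z₃₀, 3z₂₀², 5z₁₂⁴, z₁₂⁵+z₂₀³+z₃₀²)`:
`z̄₁₂⁵ = -z̄₂₀³ - z̄₃₀²`; the element `z̄₁₂³ z̄₂₀` has infinite additive order
(i.e. generates a subgroup isomorphic to `ℤ`); and `z̄₁₂⁴ z̄₂₀` has additive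
order exactly `5`. -/
theorem stmt19 :
    ((Ideal.Quotient.mk I19 (X (0 : Fin 3))) ^ 5
      = -(Ideal.Quotient.mk I19 (X (1 : Fin 3))) ^ 3
        - (Ideal.Quotient.mk I19 (X (2 : Fin 3))) ^ 2) ∧
    (addOrderOf (Ideal.Quotient.mk I19 ((X (0 : Fin 3)) ^ 3 * X (1 : Fin 3))) = 0) ∧
    (addOrderOf (Ideal.Quotient.mk I19 ((X (0 : Fin 3)) ^ 4 * X (1 : Fin 3))) = 5) := by
  refine ⟨?_, ?_, ?_⟩
  · have h : Ideal.Quotient.mk I19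
        ((X (0 : Fin 3)) ^ 5 + (X (1 : Fin 3)) ^ 3 + (X (2 : Fin 3)) ^ 2) = 0 := by
      rw [Ideal.Quotient.eq_zero_iff_mem]
      exact Ideal.subset_span (by simp)
    rw [map_add, map_add, map_pow, map_pow, map_pow] at h
    linear_combination h
  · rw [addOrderOf_eq_zero_iff']
    intro n hn hzero
    rw [← map_nsmul, Ideal.Quotient.eq_zero_iff_mem] at hzero
    have := auxZ _ hzero ((Finsupp.single (0:Fin 3) 3 + Finsupp.single (1:Fin 3) 1 : Fin 3 →₀ ℕ)) (by simp)
      (by simp) (by simp)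
    rw [coeff_smul, coeff_mul_X, coeff_X_pow, if_pos rfl] at this
    simp at this
    omega
  · have h5 : (5 : ℕ) • Ideal.Quotient.mk I19 ((X (0 : Fin 3)) ^ 4 * X (1 : Fin 3)) = 0 := by
      rw [← map_nsmul, Ideal.Quotient.eq_zero_iff_mem]
      have : (5:ℕ) • ((X (0 : Fin 3)) ^ 4 * X (1 : Fin 3) : MvPolynomial (Fin 3) ℤ)
          = (5 * (X (0 : Fin 3)) ^ 4) * X 1 := by rw [nsmul_eq_mul]; push_cast; ring
      rw [this]
      exact Ideal.mul_mem_right _ _ (Ideal.subset_span (by simp))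
    have hne : Ideal.Quotient.mk I19 ((X (0 : Fin 3)) ^ 4 * X (1 : Fin 3)) ≠ 0 := by
      intro h
      rw [Ideal.Quotient.eq_zero_iff_mem] at h
      have := aux5 _ h ((Finsupp.single (0:Fin 3) 4 + Finsupp.single (1:Fin 3) 1 : Fin 3 →₀ ℕ)) (by simp)
        (by simp) (by simp)
      rw [coeff_mul_X, coeff_X_pow, if_pos rfl] at this
      norm_num at this
    haveI : Fact (Nat.Prime 5) := ⟨by norm_num⟩
    exact addOrderOf_eq_prime h5 hne
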